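/- Let s ≥ 2 and 1 ≤ j ≤ s−1 be integers. Let p be an (s,j)-Hermite polynomial, P an (s,0)-Hermite polynomial, and r an (s−1, j−1)-Hermite polynomial. Then (∫₀¹ p(x)² dx)^{1/2} ≤ (∫₀¹ P(x)² dx)^{1/2} · (∫₀¹ r(x)² dx)^{1/2}. -/

import Mathlib

/-- A real polynomial `p` is an `(s,j)`-Hermite polynomial if `deg p ≤ 2s-1` and, for
every `0 ≤ k ≤ s-1`, `p⁽ᵏ⁾(0) = δ_{j,k}` and `p⁽ᵏ⁾(1) = 0`. -/
def IsHermitePoly (s j : ℕ) (p : Polynomial ℝ) : Prop :=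
  p.natDegree ≤ 2 * s - 1 ∧
    ∀ k < s, (Polynomial.derivative^[k] p).eval 0 = (if j = k then (1 : ℝ) else 0) ∧
      (Polynomial.derivative^[k] p).eval 1 = 0

/-- A real polynomial `q` is an `(s,j)`-dual Hermite polynomial if `deg q ≤ 2s-1` and, for
every `0 ≤ k ≤ s-1`, `q⁽ᵏ⁾(0) = 0` and `q⁽ᵏ⁾(1) = δ_{j,k}`. -/
def IsDualHermitePoly (s j : ℕ) (q : Polynomial ℝ) : Prop :=
  q.natDegree ≤ 2 * s - 1 ∧
    ∀ k < s, (Polynomial.derivative^[k] q).eval 0 = 0 ∧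
      (Polynomial.derivative^[k] q).eval 1 = (if j = k then (1 : ℝ) else 0)


open MeasureTheory

open Polynomial intervalIntegral

lemma pow_X_sub_C_dvd_of_iter_deriv {q : ℝ[X]} {a : ℝ} {n : ℕ}
    (h : ∀ k < n, (derivative^[k] q).eval a = 0) : (X - C a) ^ n ∣ q := by
  rcases eq_or_ne q 0 with rfl | hq
  · exact dvd_zero _
  rcases Nat.eq_zero_or_pos n with rfl | hn
  · simp
  have hlt : n - 1 < q.rootMultiplicity a := by
    apply Polynomial.lt_rootMultiplicity_of_isRoot_iterate_derivative_of_mem_nonZeroDivisors hq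
    · intro m hm; exact h m (by omega)
    · exact mem_nonZeroDivisors_of_ne_zero
        (Nat.cast_ne_zero.mpr (Nat.factorial_ne_zero _))
  calc (X - C a) ^ n ∣ (X - C a) ^ (q.rootMultiplicity a) := pow_dvd_pow _ (by omega)
    _ ∣ q := q.pow_rootMultiplicity_dvd a

lemma eq_C_mul_of_vanish {q : ℝ[X]} {n : ℕ}
    (hdeg : q.natDegree ≤ 2 * n)
    (h0 : ∀ k < n, (derivative^[k] q).eval 0 = 0)
    (h1 : ∀ k < n, (derivative^[k] q).eval 1 = 0) :
    ∃ c : ℝ, q = C c * (X - X ^ 2) ^ n := by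
  have d0 : (X - C (0:ℝ)) ^ n ∣ q := pow_X_sub_C_dvd_of_iter_deriv h0
  have d1 : (X - C (1:ℝ)) ^ n ∣ q := pow_X_sub_C_dvd_of_iter_deriv h1
  have hcop : IsCoprime ((X - C (0:ℝ)) ^ n) ((X - C (1:ℝ)) ^ n) :=
    (Polynomial.isCoprime_X_sub_C_of_isUnit_sub (by norm_num)).pow
  obtain ⟨u, hu⟩ := hcop.mul_dvd d0 d1
  rcases eq_or_ne u 0 with rfl | hu0
  · exact ⟨0, by simpa using hu⟩
  have hmon : ((X - C (0:ℝ)) ^ n * (X - C 1) ^ n).Monic :=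
    ((monic_X_sub_C _).pow n).mul ((monic_X_sub_C _).pow n)
  have hdeg2 : ((X - C (0:ℝ)) ^ n * (X - C 1) ^ n).natDegree = 2 * n := by
    rw [((monic_X_sub_C (0:ℝ)).pow n).natDegree_mul ((monic_X_sub_C (1:ℝ)).pow n)]
    rw [natDegree_pow, natDegree_pow, natDegree_X_sub_C, natDegree_X_sub_C]; ring
  have hudeg : u.natDegree = 0 := by
    have := hmon.natDegree_mul' (q := u) hu0
    rw [← hu] at this
    omega
  obtain ⟨c, rfl⟩ := Polynomial.natDegree_eq_zero.mp hudeg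
  refine ⟨(-1)^n * c, ?_⟩
  rw [hu]
  have : ((X : ℝ[X]) - C 0) ^ n * (X - C 1) ^ n = (-1)^n * (X - X^2)^n := by
    rw [C_0, C_1, sub_zero, ← mul_pow, ← mul_pow]
    congr 1
    ring
  rw [this, C_mul, C_pow, C_neg, C_1]
  ring

lemma amgm_aux {t1 t2 w : ℝ} (h1 : 0 ≤ t1) (h2 : 0 ≤ t2) (h : w ^ 2 ≤ t1 * t2) :
    2 * w ≤ t1 + t2 := by
  nlinarith [sq_nonneg (t1 - t2), sq_nonneg (t1 + t2 - 2 * w), sq_nonneg (t1 + t2)]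

lemma cs_combine {a b u v x y Ra Rb : ℝ} (hx : 0 ≤ x) (hy : 0 ≤ y)
    (hRa : 0 ≤ Ra) (hRb : 0 ≤ Rb) (h1 : a ^ 2 ≤ x * Ra) (h2 : b ^ 2 ≤ y * Rb) :
    (u * a + v * b) ^ 2 ≤ (x * u ^ 2 + y * v ^ 2) * (Ra + Rb) := by
  have hw : (u * v * a * b) ^ 2 ≤ (x * u ^ 2 * Rb) * (y * v ^ 2 * Ra) := by
    have h3 : a ^ 2 * b ^ 2 ≤ (x * Ra) * (y * Rb) :=
      mul_le_mul h1 h2 (sq_nonneg b) (mul_nonneg hx hRa)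
    nlinarith [sq_nonneg (u * v), mul_nonneg (mul_nonneg hx hRa) (mul_nonneg hy hRb)]
  have hAM := amgm_aux (t1 := x * u ^ 2 * Rb) (t2 := y * v ^ 2 * Ra) (w := u * v * a * b)
    (by positivity) (by positivity) hw
  nlinarith [mul_nonneg (sub_nonneg.2 h1) (sq_nonneg u),
    mul_nonneg (sub_nonneg.2 h2) (sq_nonneg v)]

lemma sq_integral_le {f : ℝ → ℝ} (hf : Continuous f) {a b : ℝ} (hab : a ≤ b) :
    (∫ t in a..b, f t) ^ 2 ≤ (b - a) * ∫ t in a..b, (f t) ^ 2 := by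
  set A := ∫ t in a..b, f t with hA
  set B := ∫ t in a..b, (f t) ^ 2 with hB
  rcases eq_or_lt_of_le hab with rfl | hlt
  · simp [hA, hB]
  have key : (0:ℝ) ≤ ∫ t in a..b, ((b - a) * f t - A) ^ 2 :=
    intervalIntegral.integral_nonneg hab (fun t _ => sq_nonneg _)
  have expand : (∫ t in a..b, ((b - a) * f t - A) ^ 2)
      = (b - a) ^ 2 * B - (2 * (b - a) * A) * A + A ^ 2 * (b - a) := by
    have h1 : ∀ t : ℝ, ((b - a) * f t - A) ^ 2
        = (b - a) ^ 2 * (f t) ^ 2 - (2 * (b - a) * A) * f t + A ^ 2 := by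
      intro t; ring
    rw [intervalIntegral.integral_congr (g := fun t => (b - a) ^ 2 * (f t) ^ 2
      - (2 * (b - a) * A) * f t + A ^ 2) (fun t _ => h1 t)]
    rw [intervalIntegral.integral_add (f := fun t => (b - a) ^ 2 * (f t) ^ 2 - (2 * (b - a) * A) * f t)
        (g := fun _ => A ^ 2) ((continuous_const.mul (hf.pow 2)).intervalIntegrable a b |>.sub
        ((continuous_const.mul hf).intervalIntegrable a b)) (intervalIntegrable_const),
      intervalIntegral.integral_sub (f := fun t => (b - a) ^ 2 * (f t) ^ 2)
        (g := fun t => (2 * (b - a) * A) * f t) ((continuous_const.mul (hf.pow 2)).intervalIntegrable a b)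
        ((continuous_const.mul hf).intervalIntegrable a b),
      intervalIntegral.integral_const_mul, intervalIntegral.integral_const_mul,
      intervalIntegral.integral_const]
    simp only [smul_eq_mul]
    rw [← hA, ← hB]; ring
  nlinarith [key, expand, sq_nonneg A]

lemma integral_symm_zero {f : ℝ → ℝ} (hsym : ∀ x, f (1 - x) = - f x) :
    (∫ x in (0:ℝ)..1, f x) = 0 := by
  have h := intervalIntegral.integral_comp_sub_left (a := (0:ℝ)) (b := 1) f 1
  simp only [sub_zero, sub_self] at h
  rw [intervalIntegral.integral_congr (g := fun x => - f x) (fun x _ => hsym x)] at h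
  rw [intervalIntegral.integral_neg] at h
  linarith

set_option maxHeartbeats 1000000

/-- submultiplicativity of the `L²(0,1)` norm along the Hermite
recursion. -/
theorem hermitePoly_l2_submultiplicative (s j : ℕ) (hs : 2 ≤ s) (hj1 : 1 ≤ j)
    (hj2 : j ≤ s - 1) (p P r : Polynomial ℝ)
    (hp : IsHermitePoly s j p) (hP : IsHermitePoly s 0 P)
    (hr : IsHermitePoly (s - 1) (j - 1) r) :
    Real.sqrt (∫ x in (0:ℝ)..1, (p.eval x) ^ 2) ≤
      Real.sqrt (∫ x in (0:ℝ)..1, (P.eval x) ^ 2) *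
        Real.sqrt (∫ x in (0:ℝ)..1, (r.eval x) ^ 2) := by
  obtain ⟨hpdeg, hpcond⟩ := hp
  obtain ⟨hPdeg, hPcond⟩ := hP
  obtain ⟨hrdeg, hrcond⟩ := hr
  set n := s - 1 with hn
  have hn1 : 1 ≤ n := by omega
  -- basic evaluations
  have hp0 : p.eval 0 = 0 := by
    have h := (hpcond 0 (by omega)).1
    rw [if_neg (by omega : ¬ j = 0)] at h
    simpa using h
  have hp1 : p.eval 1 = 0 := by simpa using (hpcond 0 (by omega)).2
  have hP0 : P.eval 0 = 1 := by simpa using (hPcond 0 (by omega)).1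
  have hP1 : P.eval 1 = 0 := by simpa using (hPcond 0 (by omega)).2
  -- structure of derivative P
  obtain ⟨dP, hdP⟩ : ∃ d : ℝ, derivative P = C d * (X - X ^ 2) ^ n := by
    apply eq_C_mul_of_vanish
    · have := natDegree_derivative_le P; omega
    · intro k hk
      rw [← Function.iterate_succ_apply]
      have := (hPcond (k+1) (by omega)).1
      simpa [(by omega : ¬ (0:ℕ) = k + 1)] using this
    · intro k hk
      rw [← Function.iterate_succ_apply]
      exact (hPcond (k+1) (by omega)).2
  -- structure of derivative p - r
  obtain ⟨cc, hcc⟩ : ∃ c : ℝ, derivative p - r = C c * (X - X ^ 2) ^ n := by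
    apply eq_C_mul_of_vanish
    · refine (natDegree_sub_le _ _).trans ?_
      have := natDegree_derivative_le p
      have := hrdeg
      omega
    · intro k hk
      rw [Polynomial.iterate_derivative_sub, eval_sub, ← Function.iterate_succ_apply]
      have h1 := (hpcond (k+1) (by omega)).1
      have h2 := (hrcond k (by omega)).1
      rw [h1, h2]
      have : (j = k + 1) ↔ (j - 1 = k) := by omega
      simp [this]
    · intro k hk
      rw [Polynomial.iterate_derivative_sub, eval_sub, ← Function.iterate_succ_apply]
      rw [(hpcond (k+1) (by omega)).2, (hrcond k (by omega)).2, sub_zero]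
  have hccev : ∀ x : ℝ, (derivative p).eval x = r.eval x + cc * (x - x ^ 2) ^ n := by
    intro x
    have : (derivative p).eval x - r.eval x = (C cc * (X - X ^ 2) ^ n).eval x := by
      rw [← eval_sub, hcc]
    simp only [eval_mul, eval_C, eval_pow, eval_sub, eval_X] at this
    linarith
  have hdPev : ∀ x : ℝ, (derivative P).eval x = dP * (x - x ^ 2) ^ n := by
    intro x
    rw [hdP]; simp
  -- continuity helpers
  have hmcont : Continuous fun t : ℝ => (t - t ^ 2) ^ n :=
    (continuous_id.sub (continuous_pow 2)).pow n
  -- the antiderivative of r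
  set H : ℝ → ℝ := fun x => ∫ t in (0:ℝ)..x, r.eval t with hH
  set lam : ℝ := ∫ t in (0:ℝ)..1, r.eval t with hlam
  have hHd : ∀ x : ℝ, HasDerivAt H (r.eval x) x := fun x =>
    intervalIntegral.integral_hasDerivAt_right (r.continuous.intervalIntegrable _ _)
      r.continuous.stronglyMeasurable.stronglyMeasurableAtFilter r.continuous.continuousAt
  -- the comparison function
  set e : ℝ := cc - lam * dP with he_def
  set F : ℝ → ℝ := fun x => (p.eval x - lam * P.eval x) + (lam - H x) with hF
  have hFd : ∀ x : ℝ, HasDerivAt F (e * (x - x ^ 2) ^ n) x := by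
    intro x
    have h1 := ((p.hasDerivAt x).sub ((P.hasDerivAt x).const_mul lam)).add
      ((hHd x).const_sub lam)
    refine HasDerivAt.congr_deriv h1 ?_
    rw [hccev x, hdPev x, he_def]
    ring
  have hF0 : F 0 = 0 := by
    simp [hF, hH, hp0, hP0, intervalIntegral.integral_same]
  have hF1 : F 1 = 0 := by
    simp [hF, hp1, hP1, ← hlam, ← hH]
    exact sub_eq_zero.mpr rfl
  -- e = 0
  set Im : ℝ := ∫ t in (0:ℝ)..1, (t - t ^ 2) ^ n with hIm
  have ImPos : 0 < Im := by
    apply intervalIntegral_pos_of_pos_on (hmcont.intervalIntegrable 0 1)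
    · intro x hx
      have : 0 < x - x ^ 2 := by nlinarith [hx.1, hx.2]
      positivity
    · norm_num
  have he : e = 0 := by
    have hFTC : (∫ x in (0:ℝ)..1, e * (x - x ^ 2) ^ n) = F 1 - F 0 :=
      intervalIntegral.integral_eq_sub_of_hasDerivAt (fun x _ => hFd x)
        ((continuous_const.mul hmcont).intervalIntegrable 0 1)
    rw [hF0, hF1, intervalIntegral.integral_const_mul, ← hIm] at hFTC
    have : e * Im = 0 := by linarith
    exact (mul_eq_zero.mp this).resolve_right (by linarith)
  have hFconst : ∀ x : ℝ, F x = 0 := by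
    intro x
    have : F x = F 0 := by
      apply is_const_of_deriv_eq_zero
      · exact fun y => (hFd y).differentiableAt
      · intro y
        have := (hFd y).deriv
        rw [this, he]; ring
    rw [this, hF0]
  have ident : ∀ x : ℝ, p.eval x = lam * P.eval x - (lam - H x) := by
    intro x
    have := hFconst x
    simp only [hF] at this
    linarith
  -- pointwise bound
  set R : ℝ := ∫ t in (0:ℝ)..1, (r.eval t) ^ 2 with hR
  have hRnn : 0 ≤ R := intervalIntegral.integral_nonneg (by norm_num) (fun t _ => sq_nonneg _)
  have pointwise : ∀ x ∈ Set.Icc (0:ℝ) 1,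
      (p.eval x) ^ 2 ≤ ((P.eval x) ^ 2 - 2 * (1 - x) * (P.eval x) + (1 - x)) * R := by
    rintro x ⟨hx0, hx1⟩
    set a : ℝ := H x with ha
    set b : ℝ := ∫ t in x..1, r.eval t with hb
    have hab : a + b = lam := by
      rw [ha, hb, hlam, hH]
      exact intervalIntegral.integral_add_adjacent_intervals
        (r.continuous.intervalIntegrable _ _) (r.continuous.intervalIntegrable _ _)
    set Ra : ℝ := ∫ t in (0:ℝ)..x, (r.eval t) ^ 2 with hRa
    set Rb : ℝ := ∫ t in x..1, (r.eval t) ^ 2 with hRb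
    have hRsum : Ra + Rb = R := by
      rw [hRa, hRb, hR]
      exact intervalIntegral.integral_add_adjacent_intervals
        ((r.continuous.pow 2).intervalIntegrable _ _) ((r.continuous.pow 2).intervalIntegrable _ _)
    have hRann : 0 ≤ Ra := intervalIntegral.integral_nonneg hx0 (fun t _ => sq_nonneg _)
    have hRbnn : 0 ≤ Rb := intervalIntegral.integral_nonneg hx1 (fun t _ => sq_nonneg _)
    have CS1 : a ^ 2 ≤ x * Ra := by
      have := sq_integral_le r.continuous hx0
      simpa using this
    have CS2 : b ^ 2 ≤ (1 - x) * Rb := sq_integral_le r.continuous hx1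
    have key := cs_combine (u := P.eval x) (v := P.eval x - 1) hx0 (by linarith) hRann hRbnn CS1 CS2
    calc (p.eval x) ^ 2 = (P.eval x * a + (P.eval x - 1) * b) ^ 2 := by
          rw [ident x, ← hab]; ring
      _ ≤ (x * (P.eval x) ^ 2 + (1 - x) * (P.eval x - 1) ^ 2) * (Ra + Rb) := key
      _ = ((P.eval x) ^ 2 - 2 * (1 - x) * (P.eval x) + (1 - x)) * R := by
          rw [hRsum]; ring
  -- integrate the pointwise bound
  set IP2 : ℝ := ∫ x in (0:ℝ)..1, (P.eval x) ^ 2 with hIP2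
  have hIP2nn : 0 ≤ IP2 := intervalIntegral.integral_nonneg (by norm_num) (fun t _ => sq_nonneg _)
  have wcont : Continuous fun x : ℝ => ((P.eval x) ^ 2 - 2 * (1 - x) * (P.eval x) + (1 - x)) :=
    (((P.continuous.pow 2).sub ((continuous_const.mul
      (continuous_const.sub continuous_id)).mul P.continuous)).add
      (continuous_const.sub continuous_id))
  have hmono : (∫ x in (0:ℝ)..1, (p.eval x) ^ 2)
      ≤ ∫ x in (0:ℝ)..1, ((P.eval x) ^ 2 - 2 * (1 - x) * (P.eval x) + (1 - x)) * R := by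
    apply intervalIntegral.integral_mono_on (by norm_num)
      ((p.continuous.pow 2).intervalIntegrable 0 1)
      ((wcont.mul continuous_const).intervalIntegrable 0 1)
    exact pointwise
  -- compute the weight integral
  set IQ : ℝ := ∫ x in (0:ℝ)..1, (1 - x) * P.eval x with hIQ
  have intA : IntervalIntegrable (fun x : ℝ => (P.eval x) ^ 2) volume 0 1 :=
    ((P.continuous.pow 2)).intervalIntegrable 0 1
  have intB : IntervalIntegrable (fun x : ℝ => 2 * ((1 - x) * P.eval x)) volume 0 1 := by
    apply Continuous.intervalIntegrable
    exact continuous_const.mul ((continuous_const.sub continuous_id).mul P.continuous)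
  have intAB : IntervalIntegrable
      (fun x : ℝ => (P.eval x) ^ 2 - 2 * ((1 - x) * P.eval x)) volume 0 1 := intA.sub intB
  have intC : IntervalIntegrable (fun x : ℝ => 1 - x) volume 0 1 := by
    apply Continuous.intervalIntegrable
    exact continuous_const.sub continuous_id
  have e2 : (∫ x in (0:ℝ)..1, (1 - x)) = 1/2 := by
    rw [intervalIntegral.integral_sub intervalIntegrable_const
      intervalIntegral.intervalIntegrable_id, integral_id, intervalIntegral.integral_const]
    norm_num
  have hsplit : (∫ x in (0:ℝ)..1, ((P.eval x) ^ 2 - 2 * (1 - x) * (P.eval x) + (1 - x)) * R)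
      = (IP2 - 2 * IQ + 1/2) * R := by
    rw [intervalIntegral.integral_mul_const]
    congr 1
    have e0 : (∫ x in (0:ℝ)..1, ((P.eval x) ^ 2 - 2 * (1 - x) * (P.eval x) + (1 - x)))
        = ∫ x in (0:ℝ)..1, ((P.eval x) ^ 2 - 2 * ((1 - x) * P.eval x) + (1 - x)) :=
      intervalIntegral.integral_congr (fun x _ => by ring)
    rw [e0, intervalIntegral.integral_add intAB intC,
      intervalIntegral.integral_sub intA intB,
      intervalIntegral.integral_const_mul, e2, ← hIP2, ← hIQ]
    try ring
  -- dP * Im = -1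
  have hdPIm : dP * Im = -1 := by
    have hFTC : (∫ x in (0:ℝ)..1, (derivative P).eval x) = P.eval 1 - P.eval 0 :=
      intervalIntegral.integral_eq_sub_of_hasDerivAt (fun x _ => P.hasDerivAt x)
        ((derivative P).continuous.intervalIntegrable 0 1)
    rw [hP0, hP1] at hFTC
    rw [intervalIntegral.integral_congr (g := fun x => dP * (x - x ^ 2) ^ n)
      (fun x _ => hdPev x), intervalIntegral.integral_const_mul, ← hIm] at hFTC
    linarith
  have hdPneg : dP ≤ 0 := by nlinarith
  -- integration by parts for IQ
  set Iu : ℝ := ∫ x in (0:ℝ)..1, (x - x ^ 2 / 2) * (x - x ^ 2) ^ n with hIu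
  have hIBP : IQ + dP * Iu = 0 := by
    have hU : ∀ x : ℝ, HasDerivAt (fun y : ℝ => (y - y ^ 2 / 2) * P.eval y)
        ((1 - x) * P.eval x + (x - x ^ 2 / 2) * (dP * (x - x ^ 2) ^ n)) x := by
      intro x
      have hu : HasDerivAt (fun y : ℝ => y - y ^ 2 / 2) (1 - x) x := by
        have := ((hasDerivAt_id x).sub ((hasDerivAt_pow 2 x).div_const 2))
        refine HasDerivAt.congr_deriv this ?_
        norm_num
      have := hu.mul (P.hasDerivAt x)
      refine HasDerivAt.congr_deriv this ?_
      rw [hdPev x]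
      try ring
    have hFTC : (∫ x in (0:ℝ)..1,
        ((1 - x) * P.eval x + (x - x ^ 2 / 2) * (dP * (x - x ^ 2) ^ n)))
        = (1 - 1 ^ 2 / 2) * P.eval 1 - (0 - 0 ^ 2 / 2) * P.eval 0 := by
      apply intervalIntegral.integral_eq_sub_of_hasDerivAt (fun x _ => hU x)
      apply Continuous.intervalIntegrable
      exact ((continuous_const.sub continuous_id).mul P.continuous).add
        (((continuous_id.sub ((continuous_pow 2).div_const 2))).mul
          (continuous_const.mul hmcont))
    rw [hP1] at hFTC
    have int1 : IntervalIntegrable (fun x : ℝ => (1 - x) * P.eval x) volume 0 1 := by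
      apply Continuous.intervalIntegrable
      exact (continuous_const.sub continuous_id).mul P.continuous
    have int2 : IntervalIntegrable
        (fun x : ℝ => (x - x ^ 2 / 2) * (dP * (x - x ^ 2) ^ n)) volume 0 1 := by
      apply Continuous.intervalIntegrable
      exact ((continuous_id.sub ((continuous_pow 2).div_const 2))).mul
        (continuous_const.mul hmcont)
    rw [intervalIntegral.integral_add int1 int2] at hFTC
    have e3 : (∫ x in (0:ℝ)..1, (x - x ^ 2 / 2) * (dP * (x - x ^ 2) ^ n)) = dP * Iu := by
      rw [intervalIntegral.integral_congr
        (g := fun x => dP * ((x - x ^ 2 / 2) * (x - x ^ 2) ^ n)) (fun x _ => by ring),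
        intervalIntegral.integral_const_mul, ← hIu]
    rw [e3, ← hIQ] at hFTC
    norm_num at hFTC
    linarith
  -- symmetry: ∫ (x - 1/2) m = 0
  have hsym : (∫ x in (0:ℝ)..1, (x - 1/2) * (x - x ^ 2) ^ n) = 0 := by
    apply integral_symm_zero
    intro x
    have h4 : ((1 - x) - (1 - x) ^ 2) ^ n = (x - x ^ 2) ^ n := by
      congr 1; ring
    simp only [h4]
    ring
  -- decomposition of Iu
  set I2 : ℝ := ∫ x in (0:ℝ)..1, (x - x ^ 2) * (x - x ^ 2) ^ n with hI2
  have hI2nn : 0 ≤ I2 := by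
    apply intervalIntegral.integral_nonneg (by norm_num)
    intro t ht
    have h5 : 0 ≤ t - t ^ 2 := by nlinarith [ht.1, ht.2]
    positivity
  have hIudec : Iu = (1/2) * I2 + (1/4) * Im := by
    have e4 : ∀ x : ℝ, (x - x ^ 2 / 2) * (x - x ^ 2) ^ n
        = (1/2) * ((x - x ^ 2) * (x - x ^ 2) ^ n) + ((1/2) * ((x - 1/2) * (x - x ^ 2) ^ n)
          + (1/4) * ((x - x ^ 2) ^ n)) := by
      intro x; ring
    have c1 : Continuous fun x : ℝ => (x - x ^ 2) * (x - x ^ 2) ^ n :=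
      (continuous_id.sub (continuous_pow 2)).mul hmcont
    have c2 : Continuous fun x : ℝ => (x - 1/2) * (x - x ^ 2) ^ n :=
      (continuous_id.sub continuous_const).mul hmcont
    have intX : IntervalIntegrable
        (fun x : ℝ => (1/2) * ((x - x ^ 2) * (x - x ^ 2) ^ n)) volume 0 1 :=
      (continuous_const.mul c1).intervalIntegrable 0 1
    have intY1 : IntervalIntegrable
        (fun x : ℝ => (1/2) * ((x - 1/2) * (x - x ^ 2) ^ n)) volume 0 1 :=
      (continuous_const.mul c2).intervalIntegrable 0 1
    have intY2 : IntervalIntegrable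
        (fun x : ℝ => (1/4) * ((x - x ^ 2) ^ n)) volume 0 1 :=
      (continuous_const.mul hmcont).intervalIntegrable 0 1
    rw [hIu, intervalIntegral.integral_congr (fun x _ => e4 x),
      intervalIntegral.integral_add intX (intY1.add intY2),
      intervalIntegral.integral_add intY1 intY2,
      intervalIntegral.integral_const_mul, intervalIntegral.integral_const_mul,
      intervalIntegral.integral_const_mul, ← hI2, ← hIm, hsym]
    ring
  have hIQ14 : 1/4 ≤ IQ := by
    have : IQ = (-dP) * ((1/2) * I2) + (1/4) * (-(dP * Im)) := by
      rw [hIudec] at hIBP; linarith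
    rw [this, hdPIm]
    have : 0 ≤ (-dP) * ((1/2) * I2) := mul_nonneg (by linarith) (by linarith)
    linarith
  -- final chain
  have hfinal : (∫ x in (0:ℝ)..1, (p.eval x) ^ 2) ≤ IP2 * R := by
    have h6 : (IP2 - 2 * IQ + 1/2) * R ≤ IP2 * R := by
      apply mul_le_mul_of_nonneg_right _ hRnn
      linarith
    calc (∫ x in (0:ℝ)..1, (p.eval x) ^ 2)
        ≤ ∫ x in (0:ℝ)..1, ((P.eval x) ^ 2 - 2 * (1 - x) * (P.eval x) + (1 - x)) * R := hmono
      _ = (IP2 - 2 * IQ + 1/2) * R := hsplit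
      _ ≤ IP2 * R := h6
  calc Real.sqrt (∫ x in (0:ℝ)..1, (p.eval x) ^ 2)
      ≤ Real.sqrt (IP2 * R) := Real.sqrt_le_sqrt hfinal
    _ = Real.sqrt IP2 * Real.sqrt R := Real.sqrt_mul hIP2nn R
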